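/- For all n ≤ N, there exists an n × N 0-1 matrix M with st₀(M) + st₁(M) = ⌈n/2⌉ + N − 1; in particular, Σ(n,N) := min over all n × N 0-1 matrices M of (st₀(M)+st₁(M)) equals ⌈n/2⌉ + N − 1. -/

import Mathlib

/-- A step of a staircase: the next position is strictly to the right in the
same row, or strictly below in the same column. -/
def Step {n N : ℕ} (p q : Fin n × Fin N) : Prop :=
  (p.1 = q.1 ∧ p.2 < q.2) ∨ (p.2 = q.2 ∧ p.1 < q.1)

/-- A `v`-staircase in the 0-1 matrix `M`: a sequence of positions all holding
the value `v`, each successive one strictly to the right in the same row or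
strictly below in the same column of the previous one. -/
def IsStaircase {n N : ℕ} (M : Fin n → Fin N → Fin 2) (v : Fin 2)
    (L : List (Fin n × Fin N)) : Prop :=
  (∀ p ∈ L, M p.1 p.2 = v) ∧ L.Chain' Step

/-- `st M v`: the maximum length of a `v`-staircase in `M`. -/
noncomputable def st {n N : ℕ} (M : Fin n → Fin N → Fin 2) (v : Fin 2) : ℕ :=
  sSup {l : ℕ | ∃ L, IsStaircase M v L ∧ L.length = l}

lemma fin2_cases (x : Fin 2) : x = 0 ∨ x = 1 := by fin_cases x <;> simp

lemma chain'_imp_mem {α : Type*} {R S : α → α → Prop} :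
    ∀ {l : List α}, l.Chain' R → (∀ a ∈ l, ∀ b ∈ l, R a b → S a b) → l.Chain' S := by
  intro l
  induction l with
  | nil => intro _ _; exact List.isChain_nil
  | cons a t ih =>
    intro h hs
    cases t with
    | nil => exact List.isChain_singleton a
    | cons b t' =>
      simp only [List.Chain', List.isChain_cons_cons] at h ⊢
      refine ⟨hs a (by simp) b (by simp) h.1, ih h.2 ?_⟩
      intro x hx y hy hxy
      exact hs x (List.mem_cons_of_mem a hx) y (List.mem_cons_of_mem a hy) hxy

lemma chain_mono_len {α : Type*} {L : List α} (g : α → ℕ) {K : ℕ}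
    (hc : L.Chain' (fun a b => g a < g b)) (hb : ∀ a ∈ L, g a < K) :
    L.length ≤ K := by
  have h1 : (L.map g).Chain' (· < ·) := by
    simp only [List.Chain', List.isChain_map]; exact hc
  have h2 : (L.map g).Pairwise (· < ·) := List.isChain_iff_pairwise.mp h1
  have h3 : (L.map g).Nodup := h2.imp Nat.ne_of_lt
  have h4 : (L.map g).toFinset ⊆ Finset.range K := by
    intro x hx
    rw [List.mem_toFinset] at hx
    obtain ⟨a, ha, rfl⟩ := List.mem_map.mp hx
    exact Finset.mem_range.mpr (hb a ha)
  calc L.length = (L.map g).length := (List.length_map _).symm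
    _ = (L.map g).toFinset.card := (List.toFinset_card_of_nodup h3).symm
    _ ≤ K := by simpa using Finset.card_le_card h4

lemma step_len {n N : ℕ} {L : List (Fin n × Fin N)} (hc : L.Chain' Step) : L.length ≤ n + N := by
  apply chain_mono_len (fun p : Fin n × Fin N => p.1.1 + p.2.1)
  · refine hc.imp ?_
    intro p q hpq
    rcases hpq with ⟨h1, h2⟩ | ⟨h1, h2⟩
    · have e : p.1.1 = q.1.1 := congrArg Fin.val h1
      have l2 : p.2.1 < q.2.1 := h2
      show p.1.1 + p.2.1 < q.1.1 + q.2.1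
      omega
    · have e : p.2.1 = q.2.1 := congrArg Fin.val h1
      have l2 : p.1.1 < q.1.1 := h2
      show p.1.1 + p.2.1 < q.1.1 + q.2.1
      omega
  · intro p _
    have := p.1.isLt
    have := p.2.isLt
    show p.1.1 + p.2.1 < n + N
    omega

lemma st_bddAbove {n N : ℕ} (M : Fin n → Fin N → Fin 2) (v : Fin 2) :
    BddAbove {l : ℕ | ∃ L, IsStaircase M v L ∧ L.length = l} := by
  refine ⟨n + N, ?_⟩
  rintro x ⟨L, hL, rfl⟩
  exact step_len hL.2

lemma length_le_st {n N : ℕ} {M : Fin n → Fin N → Fin 2} {v : Fin 2}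
    {L : List (Fin n × Fin N)} (h : IsStaircase M v L) : L.length ≤ st M v :=
  le_csSup (st_bddAbove M v) ⟨L, h, rfl⟩

lemma st_le {n N : ℕ} {M : Fin n → Fin N → Fin 2} {v : Fin 2} {K : ℕ}
    (h : ∀ L, IsStaircase M v L → L.length ≤ K) : st M v ≤ K := by
  apply csSup_le
  · exact ⟨0, [], ⟨fun p hp => absurd hp List.not_mem_nil, List.isChain_nil⟩, rfl⟩
  · rintro x ⟨L, hL, rfl⟩
    exact h L hL


def StepN (p q : ℕ × ℕ) : Prop := (p.1 = q.1 ∧ p.2 < q.2) ∨ (p.2 = q.2 ∧ p.1 < q.1)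

def OkN (n N : ℕ) (M : ℕ → ℕ → Fin 2) (v : Fin 2) (L : List (ℕ × ℕ)) : Prop :=
  (∀ p ∈ L, p.1 < n ∧ p.2 < N ∧ M p.1 p.2 = v) ∧ L.Chain' StepN

lemma key (n : ℕ) (hn : 1 ≤ n) :
    ∀ N, 1 ≤ N → ∀ M : ℕ → ℕ → Fin 2,
    ∃ A B, OkN n N M 0 A ∧ OkN n N M 1 B ∧
      (n + 1) / 2 + N - 1 ≤ A.length + B.length ∧
      (∀ a b, A.head? = some a → B.head? = some b → a.1 = b.1) := by
  intro N
  induction N with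
  | zero => intro h; exact absurd h (by omega)
  | succ N ih =>
    intro _ M
    by_cases hN : N = 0
    · -- base case: a single column
      subst hN
      have build : ∀ (v : Fin 2) (s : Finset ℕ), (∀ i ∈ s, i < n ∧ M i 0 = v) →
          ∃ L, OkN n 1 M v L ∧ L.length = s.card := by
        intro v s hs
        refine ⟨(s.sort (· ≤ ·)).map (fun i => (i, 0)), ⟨?_, ?_⟩, by simp⟩
        · intro p hp
          obtain ⟨i, hi, rfl⟩ := List.mem_map.mp hp
          have := hs i (by rwa [Finset.mem_sort] at hi)
          exact ⟨this.1, by omega, this.2⟩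
        · simp only [List.Chain', List.isChain_map]
          have hsort : (s.sort (· ≤ ·)).Pairwise (· < ·) := List.sortedLT_iff_pairwise.mp (Finset.sortedLT_sort s)
          exact List.IsChain.imp (fun a b hab => Or.inr ⟨rfl, hab⟩) hsort.isChain
      set s0 := (Finset.range n).filter (fun i => M i 0 = 0) with hs0
      set s1 := (Finset.range n).filter (fun i => M i 0 = 1) with hs1
      have hcard : s0.card + s1.card = n := by
        have h := Finset.card_filter_add_card_filter_not
          (s := Finset.range n) (p := fun i => M i 0 = 0)
        have he : (Finset.range n).filter (fun i => ¬ M i 0 = 0) = s1 := by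
          apply Finset.filter_congr
          intro i _
          rcases fin2_cases (M i 0) with h | h <;> simp [h]
        rw [he, Finset.card_range] at h
        exact h
      rcases le_or_gt ((n + 1) / 2) s0.card with h | h
      · obtain ⟨L, hL, hlen⟩ := build 0 s0 (fun i hi => by
          rw [hs0, Finset.mem_filter, Finset.mem_range] at hi; exact hi)
        refine ⟨L, [], hL, ⟨by simp, List.isChain_nil⟩, ?_, ?_⟩
        · simp only [List.length_nil]; omega
        · intro a b _ hb; simp at hb
      · have h1 : (n + 1) / 2 ≤ s1.card := by omega
        obtain ⟨L, hL, hlen⟩ := build 1 s1 (fun i hi => by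
          rw [hs1, Finset.mem_filter, Finset.mem_range] at hi; exact hi)
        refine ⟨[], L, ⟨by simp, List.isChain_nil⟩, hL, ?_, ?_⟩
        · simp only [List.length_nil]; omega
        · intro a b ha _; simp at ha
    · -- inductive step
      have hN1 : 1 ≤ N := by omega
      obtain ⟨A', B', hA', hB', hlen, hhead⟩ := ih hN1 (fun i j => M i (j + 1))
      have shOk : ∀ (v : Fin 2) (L : List (ℕ × ℕ)), OkN n N (fun i j => M i (j + 1)) v L →
          OkN n (N + 1) M v (L.map (fun p => (p.1, p.2 + 1))) := by
        rintro v L ⟨hm, hc⟩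
        constructor
        · intro p hp
          obtain ⟨q, hq, rfl⟩ := List.mem_map.mp hp
          obtain ⟨h1, h2, h3⟩ := hm q hq
          exact ⟨h1, by omega, h3⟩
        · simp only [List.Chain', List.isChain_map]
          refine hc.imp ?_
          intro a b hab
          rcases hab with ⟨h1, h2⟩ | ⟨h1, h2⟩
          · exact Or.inl ⟨h1, by omega⟩
          · exact Or.inr ⟨by simp [h1], h2⟩
      rcases A' with _ | ⟨a, At⟩
      · rcases B' with _ | ⟨b, Bt⟩
        · exfalso; simp only [List.length_nil] at hlen; omega
        · -- A' empty, B' = b :: Bt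
          obtain ⟨hb1, hb2, hb3⟩ := hB'.1 b (by simp)
          rcases fin2_cases (M b.1 0) with hv | hv
          · refine ⟨[(b.1, 0)], (b :: Bt).map (fun p => (p.1, p.2 + 1)), ⟨?_, ?_⟩,
              shOk 1 _ hB', ?_, ?_⟩
            · intro p hp
              simp only [List.mem_singleton] at hp
              subst hp
              exact ⟨hb1, by omega, hv⟩
            · exact List.isChain_singleton _
            · simp only [List.length_singleton, List.length_map, List.length_cons,
                List.length_nil] at hlen ⊢
              omega
            · intro x y hx hy
              simp only [List.head?_cons, Option.some.injEq] at hx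
              simp only [List.map_cons, List.head?_cons, Option.some.injEq] at hy
              rw [← hx, ← hy]
          · refine ⟨[], (b.1, 0) :: (b :: Bt).map (fun p => (p.1, p.2 + 1)),
              ⟨by simp, List.isChain_nil⟩, ⟨?_, ?_⟩, ?_, ?_⟩
            · intro p hp
              rcases List.mem_cons.mp hp with rfl | hp
              · exact ⟨hb1, by omega, hv⟩
              · obtain ⟨q, hq, rfl⟩ := List.mem_map.mp hp
                obtain ⟨h1, h2, h3⟩ := hB'.1 q hq
                exact ⟨h1, by omega, h3⟩
            · rw [List.map_cons]; simp only [List.Chain', List.isChain_cons_cons]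
              refine ⟨Or.inl ⟨rfl, by omega⟩, ?_⟩
              have := (shOk 1 _ hB').2
              rwa [List.map_cons] at this
            · simp only [List.length_nil, List.length_cons, List.length_map] at hlen ⊢
              omega
            · intro x y hx _; simp at hx
      · rcases B' with _ | ⟨b, Bt⟩
        · -- B' empty, A' = a :: At
          obtain ⟨ha1, ha2, ha3⟩ := hA'.1 a (by simp)
          rcases fin2_cases (M a.1 0) with hv | hv
          · refine ⟨(a.1, 0) :: (a :: At).map (fun p => (p.1, p.2 + 1)), [],
              ⟨?_, ?_⟩, ⟨by simp, List.isChain_nil⟩, ?_, ?_⟩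
            · intro p hp
              rcases List.mem_cons.mp hp with rfl | hp
              · exact ⟨ha1, by omega, hv⟩
              · obtain ⟨q, hq, rfl⟩ := List.mem_map.mp hp
                obtain ⟨h1, h2, h3⟩ := hA'.1 q hq
                exact ⟨h1, by omega, h3⟩
            · rw [List.map_cons]; simp only [List.Chain', List.isChain_cons_cons]
              refine ⟨Or.inl ⟨rfl, by omega⟩, ?_⟩
              have := (shOk 0 _ hA').2
              rwa [List.map_cons] at this
            · simp only [List.length_nil, List.length_cons, List.length_map] at hlen ⊢
              omega
            · intro x y _ hy; simp at hy
          · refine ⟨(a :: At).map (fun p => (p.1, p.2 + 1)), [(a.1, 0)],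
              shOk 0 _ hA', ⟨?_, List.isChain_singleton _⟩, ?_, ?_⟩
            · intro p hp
              simp only [List.mem_singleton] at hp
              subst hp
              exact ⟨ha1, by omega, hv⟩
            · simp only [List.length_singleton, List.length_map, List.length_cons,
                List.length_nil] at hlen ⊢
              omega
            · intro x y hx hy
              simp only [List.map_cons, List.head?_cons, Option.some.injEq] at hx
              simp only [List.head?_cons, Option.some.injEq] at hy
              rw [← hx, ← hy]
        · -- both nonempty
          obtain ⟨ha1, ha2, ha3⟩ := hA'.1 a (by simp)
          obtain ⟨hb1, hb2, hb3⟩ := hB'.1 b (by simp)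
          have hab : a.1 = b.1 := hhead a b (by simp) (by simp)
          rcases fin2_cases (M a.1 0) with hv | hv
          · refine ⟨(a.1, 0) :: (a :: At).map (fun p => (p.1, p.2 + 1)),
              (b :: Bt).map (fun p => (p.1, p.2 + 1)), ⟨?_, ?_⟩, shOk 1 _ hB', ?_, ?_⟩
            · intro p hp
              rcases List.mem_cons.mp hp with rfl | hp
              · exact ⟨ha1, by omega, hv⟩
              · obtain ⟨q, hq, rfl⟩ := List.mem_map.mp hp
                obtain ⟨h1, h2, h3⟩ := hA'.1 q hq
                exact ⟨h1, by omega, h3⟩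
            · rw [List.map_cons]; simp only [List.Chain', List.isChain_cons_cons]
              refine ⟨Or.inl ⟨rfl, by omega⟩, ?_⟩
              have := (shOk 0 _ hA').2
              rwa [List.map_cons] at this
            · simp only [List.length_cons, List.length_map] at hlen ⊢
              omega
            · intro x y hx hy
              simp only [List.head?_cons, Option.some.injEq] at hx
              simp only [List.map_cons, List.head?_cons, Option.some.injEq] at hy
              rw [← hx, ← hy]
              exact hab
          · refine ⟨(a :: At).map (fun p => (p.1, p.2 + 1)),
              (a.1, 0) :: (b :: Bt).map (fun p => (p.1, p.2 + 1)), shOk 0 _ hA', ⟨?_, ?_⟩, ?_, ?_⟩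
            · intro p hp
              rcases List.mem_cons.mp hp with rfl | hp
              · exact ⟨ha1, by omega, hv⟩
              · obtain ⟨q, hq, rfl⟩ := List.mem_map.mp hp
                obtain ⟨h1, h2, h3⟩ := hB'.1 q hq
                exact ⟨h1, by omega, h3⟩
            · rw [List.map_cons]; simp only [List.Chain', List.isChain_cons_cons]
              refine ⟨Or.inl ⟨by omega, by omega⟩, ?_⟩
              have := (shOk 1 _ hB').2
              rwa [List.map_cons] at this
            · simp only [List.length_cons, List.length_map] at hlen ⊢
              omega
            · intro x y hx hy
              simp only [List.map_cons, List.head?_cons, Option.some.injEq] at hx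
              simp only [List.head?_cons, Option.some.injEq] at hy
              rw [← hx, ← hy]


lemma lowerBound {n N : ℕ} (hn : 1 ≤ n) (hN : 1 ≤ N) (M : Fin n → Fin N → Fin 2) :
    (n + 1) / 2 + N - 1 ≤ st M 0 + st M 1 := by
  have hn0 : 0 < n := hn
  have hN0 : 0 < N := hN
  set MN : ℕ → ℕ → Fin 2 :=
    fun i j => if h : i < n ∧ j < N then M ⟨i, h.1⟩ ⟨j, h.2⟩ else 0 with hMN
  obtain ⟨A, B, hA, hB, hlen, -⟩ := key n hn N hN MN
  have conv : ∀ (v : Fin 2) (L : List (ℕ × ℕ)), OkN n N MN v L →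
      ∃ L' : List (Fin n × Fin N), IsStaircase M v L' ∧ L'.length = L.length := by
    rintro v L ⟨hm, hc⟩
    refine ⟨L.map (fun p => (⟨p.1 % n, Nat.mod_lt _ hn0⟩, ⟨p.2 % N, Nat.mod_lt _ hN0⟩)),
      ⟨?_, ?_⟩, by simp⟩
    · intro q hq
      obtain ⟨p, hp, rfl⟩ := List.mem_map.mp hq
      obtain ⟨h1, h2, h3⟩ := hm p hp
      simp only [hMN] at h3
      rw [dif_pos ⟨h1, h2⟩] at h3
      have e1 : p.1 % n = p.1 := Nat.mod_eq_of_lt h1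
      have e2 : p.2 % N = p.2 := Nat.mod_eq_of_lt h2
      convert h3 using 2
      · exact Fin.ext e1
      · exact Fin.ext e2
    · simp only [List.Chain', List.isChain_map]
      refine chain'_imp_mem hc ?_
      intro p hp q hq hpq
      obtain ⟨hp1, hp2, -⟩ := hm p hp
      obtain ⟨hq1, hq2, -⟩ := hm q hq
      rcases hpq with ⟨h1, h2⟩ | ⟨h1, h2⟩
      · left
        constructor
        · exact Fin.ext (by simp [Nat.mod_eq_of_lt hp1, Nat.mod_eq_of_lt hq1, h1])
        · show (⟨p.2 % N, _⟩ : Fin N) < ⟨q.2 % N, _⟩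
          rw [Fin.mk_lt_mk, Nat.mod_eq_of_lt hp2, Nat.mod_eq_of_lt hq2]
          exact h2
      · right
        constructor
        · exact Fin.ext (by simp [Nat.mod_eq_of_lt hp2, Nat.mod_eq_of_lt hq2, h1])
        · show (⟨p.1 % n, _⟩ : Fin n) < ⟨q.1 % n, _⟩
          rw [Fin.mk_lt_mk, Nat.mod_eq_of_lt hp1, Nat.mod_eq_of_lt hq1]
          exact h2
  obtain ⟨LA, hLA, eA⟩ := conv 0 A hA
  obtain ⟨LB, hLB, eB⟩ := conv 1 B hB
  have h1 := length_le_st hLA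
  have h2 := length_le_st hLB
  omega


/-- For 1 ≤ n ≤ N, Σ(n,N) := min over all n × N 0-1 matrices M of
st₀(M) + st₁(M) equals ⌈n/2⌉ + N − 1 (in particular the minimum is attained). -/
theorem stmt3 (n N : ℕ) (hn : 1 ≤ n) (hnN : n ≤ N) :
    IsLeast {s : ℕ | ∃ M : Fin n → Fin N → Fin 2, st M 0 + st M 1 = s}
      ((n + 1) / 2 + N - 1) := by
  have hN : 1 ≤ N := hn.trans hnN
  constructor
  · -- membership: the staircase matrix P
    set P : Fin n → Fin N → Fin 2 := fun i j =>
      if i.1 + j.1 + 2 ≤ n / 2 + 1 ∨ n / 2 + N + 1 ≤ i.1 + j.1 + 2 then 0 else 1 with hP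
    refine ⟨P, ?_⟩
    have h1le : st P 1 ≤ N - 1 := by
      apply st_le
      rintro L ⟨hv, hc⟩
      apply chain_mono_len (fun p : Fin n × Fin N => p.1.1 + p.2.1 - n / 2)
      · refine chain'_imp_mem hc ?_
        intro p hp q hq hpq
        have hvp := hv p hp
        have hvq := hv q hq
        rw [hP] at hvp hvq
        simp only at hvp hvq
        have cp : ¬(p.1.1 + p.2.1 + 2 ≤ n / 2 + 1 ∨ n / 2 + N + 1 ≤ p.1.1 + p.2.1 + 2) := by
          intro hcond
          rw [if_pos hcond] at hvp
          exact (by decide : (0 : Fin 2) ≠ 1) hvp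
        have cq : ¬(q.1.1 + q.2.1 + 2 ≤ n / 2 + 1 ∨ n / 2 + N + 1 ≤ q.1.1 + q.2.1 + 2) := by
          intro hcond
          rw [if_pos hcond] at hvq
          exact (by decide : (0 : Fin 2) ≠ 1) hvq
        show p.1.1 + p.2.1 - n / 2 < q.1.1 + q.2.1 - n / 2
        rcases hpq with ⟨e1, e2⟩ | ⟨e1, e2⟩
        · have e1' : p.1.1 = q.1.1 := congrArg Fin.val e1
          have e2' : p.2.1 < q.2.1 := e2
          omega
        · have e1' : p.2.1 = q.2.1 := congrArg Fin.val e1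
          have e2' : p.1.1 < q.1.1 := e2
          omega
      · intro p hp
        have hvp := hv p hp
        rw [hP] at hvp
        simp only at hvp
        have cp : ¬(p.1.1 + p.2.1 + 2 ≤ n / 2 + 1 ∨ n / 2 + N + 1 ≤ p.1.1 + p.2.1 + 2) := by
          intro hcond
          rw [if_pos hcond] at hvp
          exact (by decide : (0 : Fin 2) ≠ 1) hvp
        show p.1.1 + p.2.1 - n / 2 < N - 1
        omega
    have h0le : st P 0 ≤ (n + 1) / 2 := by
      apply st_le
      rintro L ⟨hv, hc⟩
      apply chain_mono_len (fun p : Fin n × Fin N =>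
        if p.1.1 + p.2.1 + 2 ≤ n / 2 + 1 then p.1.1 + p.2.1
        else p.1.1 + p.2.1 - (n / 2 + N - 1))
      · refine chain'_imp_mem hc ?_
        intro p hp q hq hpq
        have hvp := hv p hp
        have hvq := hv q hq
        rw [hP] at hvp hvq
        simp only at hvp hvq
        have cp : p.1.1 + p.2.1 + 2 ≤ n / 2 + 1 ∨ n / 2 + N + 1 ≤ p.1.1 + p.2.1 + 2 := by
          by_contra hcond
          rw [if_neg hcond] at hvp
          exact (by decide : (1 : Fin 2) ≠ 0) hvp
        have cq : q.1.1 + q.2.1 + 2 ≤ n / 2 + 1 ∨ n / 2 + N + 1 ≤ q.1.1 + q.2.1 + 2 := by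
          by_contra hcond
          rw [if_neg hcond] at hvq
          exact (by decide : (1 : Fin 2) ≠ 0) hvq
        have bp1 := p.1.isLt
        have bp2 := p.2.isLt
        have bq1 := q.1.isLt
        have bq2 := q.2.isLt
        show (if p.1.1 + p.2.1 + 2 ≤ n / 2 + 1 then p.1.1 + p.2.1
            else p.1.1 + p.2.1 - (n / 2 + N - 1)) <
          (if q.1.1 + q.2.1 + 2 ≤ n / 2 + 1 then q.1.1 + q.2.1
            else q.1.1 + q.2.1 - (n / 2 + N - 1))
        rcases hpq with ⟨e1, e2⟩ | ⟨e1, e2⟩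
        · have e1' : p.1.1 = q.1.1 := congrArg Fin.val e1
          have e2' : p.2.1 < q.2.1 := e2
          split_ifs <;> omega
        · have e1' : p.2.1 = q.2.1 := congrArg Fin.val e1
          have e2' : p.1.1 < q.1.1 := e2
          split_ifs <;> omega
      · intro p hp
        have hvp := hv p hp
        rw [hP] at hvp
        simp only at hvp
        have cp : p.1.1 + p.2.1 + 2 ≤ n / 2 + 1 ∨ n / 2 + N + 1 ≤ p.1.1 + p.2.1 + 2 := by
          by_contra hcond
          rw [if_neg hcond] at hvp
          exact (by decide : (1 : Fin 2) ≠ 0) hvp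
        have bp1 := p.1.isLt
        have bp2 := p.2.isLt
        show (if p.1.1 + p.2.1 + 2 ≤ n / 2 + 1 then p.1.1 + p.2.1
            else p.1.1 + p.2.1 - (n / 2 + N - 1)) < (n + 1) / 2
        split_ifs <;> omega
    have hlb := lowerBound hn hN P
    omega
  · rintro s ⟨M, rfl⟩
    exact lowerBound hn hN M
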